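/- arXiv:2009.00373 — 6 statements merged into one kernel-verified Lean document; each statement's English description precedes it below -/
import Mathlib

section
/- With L, d, D as above, for a finite set S ⊆ L with |S| ≥ 2 and x ∉ S, the diversity of the enlarged set decomposes as D(S ∪ {x}) = d̂ + D̂, where d̂ = min_{l ∈ S} d(x, l) and D̂ = Σ_{l ∈ S} min( min_{l' ∈ S, l' ≠ l} d(l, l'), d(l, x) ). -/
open Finset

noncomputable def dmin {L : Type*} [DecidableEq L] (d : L → L → ℝ) (x : L) (T : Finset L) : ℝ :=
  sInf ((T.image (d x) : Finset ℝ) : Set ℝ)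

noncomputable def aggDiv {L : Type*} [DecidableEq L] (d : L → L → ℝ) (S : Finset L) : ℝ :=
  ∑ l ∈ S, dmin d l (S.erase l)

lemma dmin_insert {L : Type*} [DecidableEq L] (d : L → L → ℝ) (l x : L) (T : Finset L)
    (hT : T.Nonempty) : dmin d l (insert x T) = min (d l x) (dmin d l T) := by
  unfold dmin
  rw [Finset.image_insert, Finset.coe_insert,
    csInf_insert (Finset.bddBelow _) (by simpa using hT.image (d l))]

theorem stmt1 {L : Type*} [Fintype L] [DecidableEq L] (d : L → L → ℝ)
    (hsym : ∀ a b, d a b = d b a) (hnn : ∀ a b, 0 ≤ d a b)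
    (S : Finset L) (hS : 2 ≤ S.card) (x : L) (hx : x ∉ S) :
    aggDiv d (insert x S) =
      dmin d x S + ∑ l ∈ S, min (dmin d l (S.erase l)) (d l x) := by
  unfold aggDiv
  rw [Finset.sum_insert hx, Finset.erase_insert hx]
  congr 1
  apply Finset.sum_congr rfl
  intro l hl
  have hne : x ≠ l := fun h => hx (h ▸ hl)
  rw [Finset.erase_insert_of_ne hne, dmin_insert, min_comm]
  have : 1 ≤ (S.erase l).card := by
    have := Finset.card_erase_of_mem hl
    omega
  exact Finset.card_pos.mp (by omega)
end

section
/- With L, d, D as above, for a finite set S ⊆ L with |S| ≥ 2 and x ∉ S, the diversity gain δ_d = D(S ∪ {x}) − D(S) satisfies δ_d ≤ d̂, where d̂ = min_{l ∈ S} d(x, l). -/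
open Finset

lemma dmin_anti {L : Type*} [DecidableEq L] (d : L → L → ℝ) (x : L) {T T' : Finset L}
    (hsub : T ⊆ T') (hne : T.Nonempty) : dmin d x T' ≤ dmin d x T := by
  apply csInf_le_csInf
  · exact (T'.image (d x)).finite_toSet.bddBelow
  · exact ((hne.image (d x))).to_set
  · exact_mod_cast Finset.image_subset_image hsub

theorem stmt3 {L : Type*} [Fintype L] [DecidableEq L] (d : L → L → ℝ)
    (hsym : ∀ a b, d a b = d b a) (hnn : ∀ a b, 0 ≤ d a b)
    (S : Finset L) (hS : 2 ≤ S.card) (x : L) (hx : x ∉ S) :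
    aggDiv d (insert x S) - aggDiv d S ≤ dmin d x S := by
  have key : aggDiv d (insert x S) ≤ dmin d x S + aggDiv d S := by
    unfold aggDiv
    rw [Finset.sum_insert hx, Finset.erase_insert hx]
    gcongr with l hl
    rw [Finset.erase_insert_of_ne (by rintro rfl; exact hx hl)]
    apply dmin_anti
    · exact Finset.subset_insert _ _
    · rw [← Finset.card_pos, Finset.card_erase_of_mem hl]; omega
  linarith
end

section
/- With L, d, D, R, F as above, let S ⊆ L with |S| ≥ 2, S_b ⊆ L a previously found feasible set, and S' ⊆ L \ S with |S'| = m ≥ 1. If ω · R_max + (1−ω) · D_max < F(S_b) − F(S), where R_max is the sum of the m largest relevance values over L \ S and D_max is the sum of the m largest values of x ↦ min_{l ∈ S} d(x, l) over L \ S, then F(S ∪ S') < F(S_b). -/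
open Finset

noncomputable def topSum {L : Type*} (SR : Finset L) (m : ℕ) (f : L → ℝ) : ℝ :=
  sSup { s : ℝ | ∃ T : Finset L, T ⊆ SR ∧ T.card = m ∧ s = ∑ l ∈ T, f l }

lemma le_topSum {L : Type*} (SR : Finset L) (m : ℕ) (f : L → ℝ)
    (T : Finset L) (hT : T ⊆ SR) (hc : T.card = m) :
    ∑ l ∈ T, f l ≤ topSum SR m f := by
  apply le_csSup
  · apply Set.Finite.bddAbove
    apply Set.Finite.subset ((SR.powerset.image (fun T => ∑ l ∈ T, f l)).finite_toSet)
    rintro s ⟨T, hT, hc, rfl⟩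
    simp only [Finset.coe_image, Set.mem_image, Finset.mem_coe, Finset.mem_powerset]
    exact ⟨T, hT, rfl⟩
  · exact ⟨T, hT, hc, rfl⟩

lemma dmin_anti_s8 {L : Type*} [DecidableEq L] (d : L → L → ℝ)
    (x : L) {A B : Finset L} (hAB : A ⊆ B) (hA : A.Nonempty) :
    dmin d x B ≤ dmin d x A := by
  apply csInf_le_csInf
  · exact (B.image (d x)).finite_toSet.bddBelow
  · exact_mod_cast (hA.image _)
  · exact_mod_cast Finset.image_subset_image hAB

theorem stmt8 {L : Type*} [Fintype L] [DecidableEq L] (d : L → L → ℝ)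
    (hsym : ∀ a b, d a b = d b a) (hnn : ∀ a b, 0 ≤ d a b)
    (R : L → ℝ) (hR : ∀ l, 0 ≤ R l) (ω : ℝ) (hω0 : 0 < ω) (hω1 : ω < 1)
    (S S' S_b : Finset L) (hS : 2 ≤ S.card) (hS' : S' ⊆ Sᶜ) (m : ℕ) (hm : 1 ≤ m)
    (hcard : S'.card = m)
    (hbound : ω * topSum Sᶜ m R + (1 - ω) * topSum Sᶜ m (fun x => dmin d x S) <
      (ω * ∑ l ∈ S_b, R l + (1 - ω) * aggDiv d S_b) -
        (ω * ∑ l ∈ S, R l + (1 - ω) * aggDiv d S)) :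
    ω * ∑ l ∈ S ∪ S', R l + (1 - ω) * aggDiv d (S ∪ S') <
      ω * ∑ l ∈ S_b, R l + (1 - ω) * aggDiv d S_b := by
  have hdisj : Disjoint S S' := by
    rw [Finset.disjoint_right]
    intro a ha
    exact Finset.mem_compl.mp (hS' ha)
  have hSne : S.Nonempty := Finset.card_pos.mp (by omega)
  have hsumR : ∑ l ∈ S ∪ S', R l = ∑ l ∈ S, R l + ∑ l ∈ S', R l :=
    Finset.sum_union hdisj
  have hRtop : ∑ l ∈ S', R l ≤ topSum Sᶜ m R := le_topSum _ _ _ _ hS' hcard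
  have hdtop : ∑ l ∈ S', dmin d l S ≤ topSum Sᶜ m (fun x => dmin d x S) :=
    le_topSum _ _ _ _ hS' hcard
  have hagg : aggDiv d (S ∪ S') ≤ aggDiv d S + ∑ l ∈ S', dmin d l S := by
    unfold aggDiv
    rw [Finset.sum_union hdisj]
    apply add_le_add
    · apply Finset.sum_le_sum
      intro l hl
      apply dmin_anti_s8
      · exact Finset.erase_subset_erase _ (Finset.subset_union_left)
      · rw [← Finset.card_pos, Finset.card_erase_of_mem hl]; omega
    · apply Finset.sum_le_sum
      intro l hl
      refine dmin_anti_s8 d l ?_ hSne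
      intro a ha
      rw [Finset.mem_erase]
      refine ⟨?_, Finset.mem_union_left _ ha⟩
      rintro rfl
      exact (Finset.disjoint_left.mp hdisj ha) hl
  have h1 : (0:ℝ) < 1 - ω := by linarith
  nlinarith [mul_le_mul_of_nonneg_left hRtop hω0.le,
    mul_le_mul_of_nonneg_left hdtop h1.le,
    mul_le_mul_of_nonneg_left hagg h1.le]
end

section
/- With L, d, D, R, F as above, let S ⊆ L with |S| ≥ 2, let S_R = L \ S be nonempty, let l_ref ∈ S_R attain the maximum relevance over S_R, and let D_max = max_{y ∈ S_R} min_{l ∈ S} d(y, l). Define R↓ = R(l_ref) + ((1−ω)/ω) · ( D(S ∪ {l_ref}) − D(S) − D_max ). Then for any l' ∈ S_R with F(S ∪ {l'}) > F(S ∪ {l_ref}) it holds that R(l') > R↓. -/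
open Finset

theorem stmt10 {L : Type*} [Fintype L] [DecidableEq L] (d : L → L → ℝ)
    (hsym : ∀ a b, d a b = d b a) (hnn : ∀ a b, 0 ≤ d a b)
    (R : L → ℝ) (hR : ∀ l, 0 ≤ R l) (ω : ℝ) (hω0 : 0 < ω) (hω1 : ω < 1)
    (S : Finset L) (hS : 2 ≤ S.card) (hSR : Sᶜ.Nonempty)
    (lref : L) (hlref : lref ∈ Sᶜ) (hmaxR : ∀ y ∈ Sᶜ, R y ≤ R lref)
    (Dmax : ℝ) (hDmax : Dmax = sSup ((Sᶜ.image (fun y => dmin d y S) : Finset ℝ) : Set ℝ))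
    (l' : L) (hl' : l' ∈ Sᶜ)
    (hbetter : ω * ∑ l ∈ insert l' S, R l + (1 - ω) * aggDiv d (insert l' S) >
      ω * ∑ l ∈ insert lref S, R l + (1 - ω) * aggDiv d (insert lref S)) :
    R l' > R lref + ((1 - ω) / ω) * (aggDiv d (insert lref S) - aggDiv d S - Dmax) := by
  have hl'S : l' ∉ S := by simpa using hl'
  have hlrefS : lref ∉ S := by simpa using hlref
  have hSne : S.Nonempty := Finset.card_pos.mp (by omega)
  -- bound: dmin d l' S ≤ Dmax
  have hDb : dmin d l' S ≤ Dmax := by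
    rw [hDmax]
    apply le_csSup ((Sᶜ.image (fun y => dmin d y S)).finite_toSet.bddAbove)
    exact_mod_cast Finset.mem_image_of_mem _ hl'
  -- each term shrinks
  have hterm : ∀ l ∈ S, dmin d l ((insert l' S).erase l) ≤ dmin d l (S.erase l) := by
    intro l hl
    have hne : l' ≠ l := fun h => hl'S (h ▸ hl)
    rw [Finset.erase_insert_of_ne hne]
    unfold dmin
    apply csInf_le_csInf ((insert l' (S.erase l)).image (d l)).finite_toSet.bddBelow
    · have : (S.erase l).Nonempty := by
        rw [← Finset.card_pos, Finset.card_erase_of_mem hl]; omega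
      exact_mod_cast this.image _
    · exact_mod_cast Finset.image_subset_image (Finset.subset_insert _ _)
  have hagg : aggDiv d (insert l' S) ≤ Dmax + aggDiv d S := by
    unfold aggDiv
    rw [Finset.sum_insert hl'S, Finset.erase_insert hl'S]
    exact add_le_add hDb (Finset.sum_le_sum hterm)
  rw [Finset.sum_insert hl'S, Finset.sum_insert hlrefS] at hbetter
  have h1ω : (0:ℝ) < 1 - ω := by linarith
  have key : ω * R l' > ω * R lref +
      (1 - ω) * (aggDiv d (insert lref S) - aggDiv d S - Dmax) := by nlinarith
  rw [gt_iff_lt, ← mul_lt_mul_iff_right₀ hω0]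
  have heq : ω * (R lref + (1 - ω) / ω * (aggDiv d (insert lref S) - aggDiv d S - Dmax))
      = ω * R lref + (1 - ω) * (aggDiv d (insert lref S) - aggDiv d S - Dmax) := by
    field_simp
  rw [heq]
  linarith
end

section
/- With L, d, D, R, F as above, let S ⊆ L with |S| ≥ 2, x ∉ S, d̂ = min_{l ∈ S} d(x, l), D̂ = Σ_{l ∈ S} min( min_{l' ∈ S \ {l}} d(l, l'), d(l, x) ), and suppose F(S ∪ {x}) > F(S). Then D̂ > D(S) − d̂_max − (ω/(1−ω)) · δ_r_max, where d̂_max = max_{y ∈ L \ S} min_{l ∈ S} d(y, l) and δ_r_max = max_{y ∈ L \ S} R(y). -/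
open Finset

theorem stmt12 {L : Type*} [Fintype L] [DecidableEq L] (d : L → L → ℝ)
    (hsym : ∀ a b, d a b = d b a) (hnn : ∀ a b, 0 ≤ d a b)
    (R : L → ℝ) (hR : ∀ l, 0 ≤ R l) (ω : ℝ) (hω0 : 0 < ω) (hω1 : ω < 1)
    (S : Finset L) (hS : 2 ≤ S.card) (x : L) (hx : x ∉ S)
    (hgain : ω * ∑ l ∈ insert x S, R l + (1 - ω) * aggDiv d (insert x S) >
      ω * ∑ l ∈ S, R l + (1 - ω) * aggDiv d S) :
    ∑ l ∈ S, min (dmin d l (S.erase l)) (d l x) >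
      aggDiv d S - sSup ((Sᶜ.image (fun y => dmin d y S) : Finset ℝ) : Set ℝ) -
        (ω / (1 - ω)) * sSup ((Sᶜ.image R : Finset ℝ) : Set ℝ) := by
  have hxc : x ∈ Sᶜ := Finset.mem_compl.mpr hx
  have h1ω : (0:ℝ) < 1 - ω := by linarith
  -- aggDiv of insert
  have hagg : aggDiv d (insert x S) =
      dmin d x S + ∑ l ∈ S, min (dmin d l (S.erase l)) (d l x) := by
    unfold aggDiv
    rw [Finset.sum_insert hx, Finset.erase_insert hx]
    congr 1
    apply Finset.sum_congr rfl
    intro l hl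
    have hxl : x ≠ l := fun h => hx (h ▸ hl)
    rw [Finset.erase_insert_of_ne (Ne.symm hxl).symm]
    rw [dmin_insert d l x (S.erase l)
      (Finset.card_pos.mp (by rw [Finset.card_erase_of_mem hl]; omega))]
    rw [min_comm]
  have hRx : R x ≤ sSup ((Sᶜ.image R : Finset ℝ) : Set ℝ) :=
    le_csSup ((Sᶜ.image R).finite_toSet.bddAbove)
      (by simpa using Finset.mem_image_of_mem R hxc)
  have hdx : dmin d x S ≤ sSup ((Sᶜ.image (fun y => dmin d y S) : Finset ℝ) : Set ℝ) :=
    le_csSup ((Sᶜ.image _).finite_toSet.bddAbove)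
      (by simpa using Finset.mem_image_of_mem (fun y => dmin d y S) hxc)
  rw [Finset.sum_insert hx, hagg] at hgain
  have hc : (ω / (1 - ω)) * (1 - ω) = ω := div_mul_cancel₀ ω (ne_of_gt h1ω)
  have hcnn : 0 ≤ ω / (1 - ω) := le_of_lt (div_pos hω0 h1ω)
  set M1 := sSup ((Sᶜ.image (fun y => dmin d y S) : Finset ℝ) : Set ℝ)
  set M2 := sSup ((Sᶜ.image R : Finset ℝ) : Set ℝ)
  have hA : ω * R x ≤ (1 - ω) * ((ω / (1 - ω)) * M2) := by
    have : ω * R x ≤ ω * M2 := mul_le_mul_of_nonneg_left hRx hω0.le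
    calc ω * R x ≤ ω * M2 := this
      _ = (1 - ω) * ((ω / (1 - ω)) * M2) := by
          rw [show (1 - ω) * ((ω / (1 - ω)) * M2) = (ω / (1 - ω) * (1 - ω)) * M2 by ring, hc]
  have hB : (1 - ω) * dmin d x S ≤ (1 - ω) * M1 :=
    mul_le_mul_of_nonneg_left hdx h1ω.le
  have key : (1 - ω) * (aggDiv d S - M1 - (ω / (1 - ω)) * M2) <
      (1 - ω) * ∑ l ∈ S, min (dmin d l (S.erase l)) (d l x) := by nlinarith
  exact (mul_lt_mul_iff_right₀ h1ω).mp key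
end

section
/- With L, d, D, R, F as above, let S ⊆ L with 2 ≤ |S|, let S_b be a feasible set, and let x ∈ L \ S with D̂ = Σ_{l ∈ S} min( min_{l' ∈ S \ {l}} d(l, l'), d(l, x) ) and d̂ = min_{l ∈ S} d(x, l). If F(S ∪ {x}) > F(S_b), then D̂ > (1/(1−ω)) · ( F(S_b) − ω · ( Σ_{l ∈ S} R(l) + R(x) ) ) − d̂. -/
open Finset

theorem stmt13 {L : Type*} [Fintype L] [DecidableEq L] (d : L → L → ℝ)
    (hsym : ∀ a b, d a b = d b a) (hnn : ∀ a b, 0 ≤ d a b)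
    (R : L → ℝ) (hR : ∀ l, 0 ≤ R l) (ω : ℝ) (hω0 : 0 < ω) (hω1 : ω < 1)
    (S S_b : Finset L) (hS : 2 ≤ S.card) (x : L) (hx : x ∉ S)
    (hbeat : ω * ∑ l ∈ insert x S, R l + (1 - ω) * aggDiv d (insert x S) >
      ω * ∑ l ∈ S_b, R l + (1 - ω) * aggDiv d S_b) :
    ∑ l ∈ S, min (dmin d l (S.erase l)) (d l x) >
      (1 / (1 - ω)) *
        ((ω * ∑ l ∈ S_b, R l + (1 - ω) * aggDiv d S_b) - ω * (∑ l ∈ S, R l + R x)) -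
        dmin d x S := by
  have hagg : aggDiv d (insert x S) =
      dmin d x S + ∑ l ∈ S, min (dmin d l (S.erase l)) (d l x) := by
    unfold aggDiv
    rw [Finset.sum_insert hx, Finset.erase_insert hx]
    congr 1
    apply Finset.sum_congr rfl
    intro l hl
    have hne : l ≠ x := fun h => hx (h ▸ hl)
    rw [Finset.erase_insert_of_ne hne.symm, dmin_insert]
    · rw [min_comm]
    · rw [← Finset.card_pos, Finset.card_erase_of_mem hl]; omega
  rw [Finset.sum_insert hx, hagg] at hbeat
  have h1 : (0:ℝ) < 1 - ω := by linarith
  rw [gt_iff_lt, sub_lt_iff_lt_add, div_mul_eq_mul_div, div_lt_iff₀ h1]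
  nlinarith [hbeat]
end
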